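/- arXiv:1707.05866 — 2 statements merged into one kernel-verified Lean document; each statement's English description precedes it below -/
import Mathlib

section
/- Let p(N) be a sequence in (0,1] with N·p(N) → ∞. Set n(N) = ⌈N / sqrt(N·p(N))⌉. Then n(N)/N → 0 and, for every fixed ε ∈ (0,1), the quantity C(N, ⌈εN⌉) · C(N, n(N)) · (1 - p(N))^{⌈εN⌉ · n(N)} tends to 0 as N → ∞. -/
open Filter Real

private lemma choose_le_two_pow' (N k : ℕ) : N.choose k ≤ 2 ^ N := by
  rcases le_or_gt k N with h | h
  · calc N.choose k ≤ ∑ m ∈ Finset.range (N + 1), N.choose m :=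
          Finset.single_le_sum (fun i _ => Nat.zero_le _)
            (Finset.mem_range.2 (Nat.lt_succ_of_le h))
      _ = 2 ^ N := Nat.sum_range_choose N
  · simp [Nat.choose_eq_zero_of_lt h]

private lemma sqrt_tendsto_atTop' : Tendsto Real.sqrt atTop atTop := by
  refine Filter.tendsto_atTop_atTop.2 fun b => ⟨b ^ 2, fun x hx => ?_⟩
  calc b ≤ |b| := le_abs_self b
    _ = Real.sqrt (b ^ 2) := (Real.sqrt_sq_eq_abs b).symm
    _ ≤ Real.sqrt x := Real.sqrt_le_sqrt hx

theorem stmt9 (p : ℕ → ℝ) (hp : ∀ N, 0 < p N ∧ p N ≤ 1)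
    (hdiv : Filter.Tendsto (fun N : ℕ => (N : ℝ) * p N) Filter.atTop Filter.atTop)
    (n : ℕ → ℕ) (hn : ∀ N, n N = ⌈(N : ℝ) / Real.sqrt (N * p N)⌉₊) :
    Filter.Tendsto (fun N : ℕ => (n N : ℝ) / N) Filter.atTop (nhds 0) ∧
    ∀ ε : ℝ, 0 < ε → ε < 1 →
      Filter.Tendsto (fun N : ℕ =>
          (N.choose ⌈ε * N⌉₊ : ℝ) * (N.choose (n N) : ℝ) * (1 - p N) ^ (⌈ε * N⌉₊ * n N))
        Filter.atTop (nhds 0) := by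
  have hsq : Tendsto (fun N : ℕ => Real.sqrt ((N : ℝ) * p N)) atTop atTop :=
    sqrt_tendsto_atTop'.comp hdiv
  constructor
  · -- n N / N → 0
    have hub : Tendsto (fun N : ℕ => 1 / Real.sqrt ((N : ℝ) * p N) + 1 / (N : ℝ)) atTop
        (nhds 0) := by
      have h1 : Tendsto (fun N : ℕ => 1 / Real.sqrt ((N : ℝ) * p N)) atTop (nhds 0) := by
        simpa only [one_div, Function.comp_def] using tendsto_inv_atTop_zero.comp hsq
      simpa using h1.add tendsto_one_div_atTop_nhds_zero_nat
    refine tendsto_of_tendsto_of_tendsto_of_le_of_le' tendsto_const_nhds hub ?_ ?_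
    · filter_upwards with N; positivity
    · filter_upwards [eventually_ge_atTop 1] with N hN
      have hN0 : (0 : ℝ) < N := by exact_mod_cast hN
      have hpN := (hp N).1
      have hs : 0 < Real.sqrt ((N : ℝ) * p N) := Real.sqrt_pos.2 (by positivity)
      have hceil : ((n N : ℝ)) ≤ (N : ℝ) / Real.sqrt ((N : ℝ) * p N) + 1 := by
        rw [hn N]
        exact (Nat.ceil_lt_add_one (by positivity)).le
      calc (n N : ℝ) / N ≤ ((N : ℝ) / Real.sqrt ((N : ℝ) * p N) + 1) / N := by
            gcongr
        _ = 1 / Real.sqrt ((N : ℝ) * p N) + 1 / N := by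
            field_simp
  · intro ε hε hε1
    have hub : Tendsto (fun N : ℕ => Real.exp (-(N : ℝ))) atTop (nhds 0) :=
      Real.tendsto_exp_neg_atTop_nhds_zero.comp tendsto_natCast_atTop_atTop
    refine tendsto_of_tendsto_of_tendsto_of_le_of_le' tendsto_const_nhds hub ?_ ?_
    · filter_upwards with N
      have hpN := (hp N)
      have h1p : (0 : ℝ) ≤ 1 - p N := by linarith [hpN.2]
      positivity
    · filter_upwards [eventually_ge_atTop 1,
        hsq.eventually_ge_atTop ((2 * Real.log 2 + 1) / ε)] with N hN hsqN
      have hN0 : (0 : ℝ) < N := by exact_mod_cast hN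
      have hpN := hp N
      have hp1 := hpN.1
      have h1p : (0 : ℝ) ≤ 1 - p N := by linarith [hpN.2]
      have hs : 0 < Real.sqrt ((N : ℝ) * p N) := Real.sqrt_pos.2 (by positivity)
      -- lower bound on the exponent count
      have hk : ε * N ≤ (⌈ε * N⌉₊ : ℝ) := Nat.le_ceil _
      have hnN : (N : ℝ) / Real.sqrt ((N : ℝ) * p N) ≤ (n N : ℝ) := by
        rw [hn N]; exact Nat.le_ceil _
      have hcnt : ε * N * ((N : ℝ) / Real.sqrt ((N : ℝ) * p N)) ≤
          ((⌈ε * N⌉₊ * n N : ℕ) : ℝ) := by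
        push_cast
        have h0 : 0 ≤ ε * N := by positivity
        have h0' : 0 ≤ (N : ℝ) / Real.sqrt ((N : ℝ) * p N) := by positivity
        exact mul_le_mul hk hnN h0' (le_trans h0 hk)
      -- (1-p)^m ≤ exp(-p*m)
      have hbase : 1 - p N ≤ Real.exp (-(p N)) := by
        have := Real.add_one_le_exp (-(p N)); linarith
      set m := ⌈ε * N⌉₊ * n N with hm
      have hpow : (1 - p N) ^ m ≤ Real.exp (-(p N) * m) := by
        calc (1 - p N) ^ m ≤ Real.exp (-(p N)) ^ m := pow_le_pow_left₀ h1p hbase m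
          _ = Real.exp (-(p N) * m) := by rw [← Real.exp_nat_mul]; ring_nf
      -- exponent bound : p N * m ≥ ε * N * sqrt(N p N)
      have hexp : ε * (N : ℝ) * Real.sqrt ((N : ℝ) * p N) ≤ p N * m := by
        have key : p N * (ε * N * ((N : ℝ) / Real.sqrt ((N : ℝ) * p N))) =
            ε * N * Real.sqrt ((N : ℝ) * p N) := by
          have : p N * ((N : ℝ) / Real.sqrt ((N : ℝ) * p N)) =
              Real.sqrt ((N : ℝ) * p N) := by
            have h' : p N * ((N : ℝ) / Real.sqrt ((N : ℝ) * p N)) =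
                ((N : ℝ) * p N) / Real.sqrt ((N : ℝ) * p N) := by ring
            rw [h', Real.div_sqrt]
          calc p N * (ε * N * ((N : ℝ) / Real.sqrt ((N : ℝ) * p N)))
              = ε * N * (p N * ((N : ℝ) / Real.sqrt ((N : ℝ) * p N))) := by ring
            _ = ε * N * Real.sqrt ((N : ℝ) * p N) := by rw [this]
        calc ε * (N : ℝ) * Real.sqrt ((N : ℝ) * p N)
            = p N * (ε * N * ((N : ℝ) / Real.sqrt ((N : ℝ) * p N))) := key.symm
          _ ≤ p N * m := by
              have := hpN.1
              exact mul_le_mul_of_nonneg_left hcnt this.le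
      -- choose bounds
      have hc1 : (N.choose ⌈ε * N⌉₊ : ℝ) ≤ 2 ^ N := by
        exact_mod_cast Nat.cast_le.2 (choose_le_two_pow' N _)
      have hc2 : (N.choose (n N) : ℝ) ≤ 2 ^ N := by
        exact_mod_cast Nat.cast_le.2 (choose_le_two_pow' N _)
      have hc1' : (0 : ℝ) ≤ (N.choose ⌈ε * N⌉₊ : ℝ) := Nat.cast_nonneg _
      have hc2' : (0 : ℝ) ≤ (N.choose (n N) : ℝ) := Nat.cast_nonneg _
      have hpow' : (0 : ℝ) ≤ (1 - p N) ^ m := by positivity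
      have step1 : (N.choose ⌈ε * N⌉₊ : ℝ) * (N.choose (n N) : ℝ) * (1 - p N) ^ m ≤
          (2 : ℝ) ^ N * 2 ^ N * Real.exp (-(p N) * m) := by
        have h2 : (0:ℝ) ≤ (2:ℝ) ^ N := by positivity
        gcongr
      have step2 : (2 : ℝ) ^ N * 2 ^ N * Real.exp (-(p N) * m) ≤ Real.exp (-(N : ℝ)) := by
        have h2exp : (2 : ℝ) ^ N = Real.exp (N * Real.log 2) := by
          rw [Real.exp_nat_mul, Real.exp_log two_pos]
        rw [h2exp, ← Real.exp_add, ← Real.exp_add]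
        apply Real.exp_le_exp.2
        have hsqb : (2 * Real.log 2 + 1) ≤ ε * Real.sqrt ((N : ℝ) * p N) := by
          rw [div_le_iff₀ hε] at hsqN
          linarith [hsqN]
        have : (2 * Real.log 2 + 1) * N ≤ ε * N * Real.sqrt ((N : ℝ) * p N) := by
          calc (2 * Real.log 2 + 1) * N ≤ ε * Real.sqrt ((N : ℝ) * p N) * N :=
                mul_le_mul_of_nonneg_right hsqb hN0.le
            _ = ε * N * Real.sqrt ((N : ℝ) * p N) := by ring
        have hfin : (2 * Real.log 2 + 1) * N ≤ p N * m := le_trans this hexp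
        nlinarith [hfin]
      exact le_trans step1 step2
end

section
/- Let p(N) be a sequence in (0,1] with sqrt(N)·p(N)/log(N) → ∞. Set n(N) = ⌈sqrt(N) / sqrt(sqrt(N)·p(N)/log(N))⌉. Then n(N)/sqrt(N) → 0 and, for every fixed ε > 0, the quantity N^{ε sqrt(N)} · N^{n(N)} · exp(-ε sqrt(N)·p(N)·n(N)) tends to 0 as N → ∞. -/
open Filter Real

theorem stmt10 (p : ℕ → ℝ) (hp : ∀ N, 0 < p N ∧ p N ≤ 1)
    (hdiv : Filter.Tendsto (fun N : ℕ => Real.sqrt N * p N / Real.log N)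
      Filter.atTop Filter.atTop)
    (n : ℕ → ℕ)
    (hn : ∀ N, n N = ⌈Real.sqrt N / Real.sqrt (Real.sqrt N * p N / Real.log N)⌉₊) :
    Filter.Tendsto (fun N : ℕ => (n N : ℝ) / Real.sqrt N) Filter.atTop (nhds 0) ∧
    ∀ ε : ℝ, 0 < ε →
      Filter.Tendsto (fun N : ℕ =>
          (N : ℝ) ^ (ε * Real.sqrt N) * (N : ℝ) ^ (n N) *
            Real.exp (-(ε * Real.sqrt N * p N * n N)))
        Filter.atTop (nhds 0) := by
  set a : ℕ → ℝ := fun N => Real.sqrt N * p N / Real.log N with ha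
  have hNcast : Tendsto (fun N : ℕ => (N : ℝ)) atTop atTop :=
    tendsto_natCast_atTop_atTop
  have hsqrtN : Tendsto (fun N : ℕ => Real.sqrt N) atTop atTop :=
    sqrt_tendsto_atTop'.comp hNcast
  have hsqrta : Tendsto (fun N : ℕ => Real.sqrt (a N)) atTop atTop :=
    sqrt_tendsto_atTop'.comp hdiv
  constructor
  · -- n N / √N → 0
    have hg : Tendsto (fun N : ℕ => (Real.sqrt (a N))⁻¹ + (Real.sqrt N)⁻¹) atTop (nhds 0) := by
      have h1 := hsqrta.inv_tendsto_atTop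
      have h2 := hsqrtN.inv_tendsto_atTop
      simpa using h1.add h2
    apply squeeze_zero' ?_ ?_ hg
    · filter_upwards [eventually_ge_atTop 1] with N hN
      positivity
    · filter_upwards [eventually_ge_atTop 1, hdiv.eventually_ge_atTop 1] with N hN haN
      have hs : (0:ℝ) < Real.sqrt N := Real.sqrt_pos.2 (by exact_mod_cast Nat.pos_of_ne_zero (by omega))
      have hsa : (1:ℝ) ≤ Real.sqrt (a N) := by
        rw [show (1:ℝ) = Real.sqrt 1 by simp]
        exact Real.sqrt_le_sqrt haN
      have hsa0 : (0:ℝ) < Real.sqrt (a N) := lt_of_lt_of_le one_pos hsa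
      have hceil : (n N : ℝ) ≤ Real.sqrt N / Real.sqrt (a N) + 1 := by
        rw [hn N]
        exact le_of_lt (Nat.ceil_lt_add_one (by positivity))
      rw [div_le_iff₀ hs]
      have key : ((Real.sqrt (a N))⁻¹ + (Real.sqrt N)⁻¹) * Real.sqrt N
          = Real.sqrt N / Real.sqrt (a N) + 1 := by
        field_simp
      rw [key]
      exact hceil
  · -- second part
    intro ε hε
    -- the exponent
    set E : ℕ → ℝ := fun N =>
      ε * Real.sqrt N * Real.log N + (n N : ℝ) * Real.log N
        - ε * Real.sqrt N * p N * (n N : ℝ) with hE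
    have hEbot : Tendsto E atTop atBot := by
      have hb : Tendsto (fun N : ℕ => -ε * (Real.sqrt N * Real.log N)) atTop atBot := by
        apply Tendsto.neg_mul_atTop (C := -ε) (by linarith) tendsto_const_nhds
        exact hsqrtN.atTop_mul_atTop₀ (Real.tendsto_log_atTop.comp hNcast)
      apply tendsto_atBot_mono' atTop ?_ hb
      filter_upwards [eventually_ge_atTop 2, hdiv.eventually_ge_atTop 16,
        hdiv.eventually_ge_atTop (2 / ε)] with N hN2 ha16 haε
      have hN1 : (1:ℝ) < (N:ℝ) := by exact_mod_cast hN2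
      have hL : 0 < Real.log N := Real.log_pos hN1
      have hs : (1:ℝ) ≤ Real.sqrt N := by
        rw [show (1:ℝ) = Real.sqrt 1 by simp]
        exact Real.sqrt_le_sqrt (by linarith)
      have hs0 : (0:ℝ) < Real.sqrt N := by linarith
      have hsa : (4:ℝ) ≤ Real.sqrt (a N) := by
        rw [show (4:ℝ) = Real.sqrt 16 by
          rw [show (16:ℝ) = 4 ^ 2 by norm_num, Real.sqrt_sq (by norm_num)]]
        exact Real.sqrt_le_sqrt ha16
      have hsa0 : (0:ℝ) < Real.sqrt (a N) := by linarith
      have ha0 : (0:ℝ) < a N := by nlinarith [Real.sq_sqrt (le_of_lt (lt_of_lt_of_le (by norm_num : (0:ℝ) < 16) ha16))]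
      have hm0 : (0:ℝ) ≤ (n N : ℝ) := Nat.cast_nonneg _
      -- n N ≥ √N / √a
      have hmlb : Real.sqrt N / Real.sqrt (a N) ≤ (n N : ℝ) := by
        rw [hn N]; exact Nat.le_ceil _
      -- a * n ≥ √a * √N
      have haan : Real.sqrt (a N) * Real.sqrt N ≤ a N * (n N : ℝ) := by
        have h1 : a N / Real.sqrt (a N) = Real.sqrt (a N) := Real.div_sqrt
        calc Real.sqrt (a N) * Real.sqrt N = (a N / Real.sqrt (a N)) * Real.sqrt N := by rw [h1]
          _ = a N * (Real.sqrt N / Real.sqrt (a N)) := by ring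
          _ ≤ a N * (n N : ℝ) := by
              exact mul_le_mul_of_nonneg_left hmlb (le_of_lt ha0)
      -- 2 n ≤ ε a n
      have h2n : 2 * (n N : ℝ) ≤ ε * (a N * (n N : ℝ)) := by
        have : 2 ≤ ε * a N := by
          rw [div_le_iff₀ hε] at haε; linarith [mul_comm (a N) ε]
        nlinarith
      -- √N p N = a N * log N
      have hsP : Real.sqrt N * p N = a N * Real.log N := by
        rw [ha]; field_simp
      -- rewrite E
      have hE' : E N = Real.log N * (ε * Real.sqrt N + (n N : ℝ) - ε * (a N * (n N : ℝ))) := by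
        rw [hE]
        simp only
        rw [show ε * Real.sqrt N * p N * (n N : ℝ)
            = ε * (Real.sqrt N * p N) * (n N : ℝ) by ring, hsP]
        ring
      rw [hE']
      have hinner : ε * Real.sqrt N + (n N : ℝ) - ε * (a N * (n N : ℝ))
          ≤ -ε * Real.sqrt N := by
        have h3 : ε * (Real.sqrt (a N) * Real.sqrt N) ≤ ε * (a N * (n N : ℝ)) :=
          mul_le_mul_of_nonneg_left haan (le_of_lt hε)
        have h4 : ε * (4 * Real.sqrt N) ≤ ε * (Real.sqrt (a N) * Real.sqrt N) := by
          apply mul_le_mul_of_nonneg_left _ (le_of_lt hε)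
          nlinarith
        nlinarith
      calc Real.log N * (ε * Real.sqrt N + (n N : ℝ) - ε * (a N * (n N : ℝ)))
          ≤ Real.log N * (-ε * Real.sqrt N) :=
            mul_le_mul_of_nonneg_left hinner (le_of_lt hL)
        _ = -ε * (Real.sqrt N * Real.log N) := by ring
    have hexp : Tendsto (fun N : ℕ => Real.exp (E N)) atTop (nhds 0) :=
      Real.tendsto_exp_atBot.comp hEbot
    apply hexp.congr'
    filter_upwards [eventually_ge_atTop 1] with N hN
    have hN0 : (0:ℝ) < (N:ℝ) := by exact_mod_cast Nat.pos_of_ne_zero (by omega)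
    have h1 : (N:ℝ) ^ (ε * Real.sqrt N) = Real.exp (ε * Real.sqrt N * Real.log N) := by
      rw [Real.rpow_def_of_pos hN0]; ring_nf
    have h2 : (N:ℝ) ^ (n N) = Real.exp ((n N : ℝ) * Real.log N) := by
      rw [← Real.exp_log (pow_pos hN0 (n N)), Real.log_pow]
    rw [hE]
    simp only
    rw [h1, h2, ← Real.exp_add, ← Real.exp_add]
    congr 1
end
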